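/- arXiv:1805.05012 — 4 statements merged into one kernel-verified Lean document; each statement's English description precedes it below -/
import Mathlib

section
/- For every integer n ≥ 1 with F(n) > 0, the function t ↦ R(t,n) is differentiable on [0,∞) and satisfies the recursive linear ODE (1/λ) ∂R(t,n)/∂t = −(∑_{i=1}^{n} F(i)) R(t,n) + 2 ∑_{i=1}^{n−1} F(n−i) R(t,i), with boundary condition R(0,n) = n; and if F(n) = 0 then R(t,n) = n satisfies the same equation trivially (all coefficients vanish). -/
open Finset MeasureTheory intervalIntegral Real Filter

noncomputable section

/-- The CDF `F(k) = ∑_{j=1}^k f(j)` of the bundle-size pmf `f`. -/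
def cdfF (f : ℕ → ℝ) (k : ℕ) : ℝ := ∑ j ∈ Finset.Icc 1 k, f j

/-- `R(t,n)`: the expected number of remaining packages at time `t` starting from `n`
packages on a line, given via its closed-form solution in terms of the constants `γ`. -/
def Rfun (f : ℕ → ℝ) (γ : ℕ → ℕ → ℝ) (lam t : ℝ) (n : ℕ) : ℝ :=
  if 0 < cdfF f n then
    ∑ i ∈ Finset.Icc 1 n, γ n i * Real.exp (-(lam * ∑ j ∈ Finset.Icc 1 i, cdfF f j) * t)
  else (n : ℝ)

/-- `K(t,n) = n - R(t,n)`. -/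
def Kfun (f : ℕ → ℝ) (γ : ℕ → ℕ → ℝ) (lam t : ℝ) (n : ℕ) : ℝ :=
  (n : ℝ) - Rfun f γ lam t n


lemma cdfF_nonneg {f : ℕ → ℝ} (hf : ∀ k, 0 ≤ f k) (k : ℕ) : 0 ≤ cdfF f k :=
  Finset.sum_nonneg fun j _ => hf j

lemma cdfF_mono {f : ℕ → ℝ} (hf : ∀ k, 0 ≤ f k) {j k : ℕ} (h : j ≤ k) :
    cdfF f j ≤ cdfF f k :=
  Finset.sum_le_sum_of_subset_of_nonneg (Finset.Icc_subset_Icc_right h) (fun i _ _ => hf i)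

lemma Rfun_eq_sum {f : ℕ → ℝ} (hf : ∀ k, 0 ≤ f k) {γ : ℕ → ℕ → ℝ}
    (hγ_zero : ∀ n j : ℕ, cdfF f n = 0 → 1 ≤ j → j ≤ n → γ n j = 1)
    (lam t : ℝ) (i : ℕ) :
    Rfun f γ lam t i =
      ∑ j ∈ Finset.Icc 1 i, γ i j * Real.exp (-(lam * ∑ k ∈ Finset.Icc 1 j, cdfF f k) * t) := by
  unfold Rfun
  split_ifs with h
  · rfl
  · push_neg at h
    have h0 : cdfF f i = 0 := le_antisymm h (cdfF_nonneg hf i)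
    have key : ∀ j ∈ Finset.Icc 1 i,
        γ i j * Real.exp (-(lam * ∑ k ∈ Finset.Icc 1 j, cdfF f k) * t) = 1 := by
      intro j hj
      simp only [Finset.mem_Icc] at hj
      have hz : ∀ k ∈ Finset.Icc 1 j, cdfF f k = 0 := by
        intro k hk
        simp only [Finset.mem_Icc] at hk
        exact le_antisymm (h0 ▸ cdfF_mono hf (hk.2.trans hj.2)) (cdfF_nonneg hf k)
      rw [hγ_zero i j h0 hj.1 hj.2, Finset.sum_eq_zero hz]
      simp
    rw [Finset.sum_congr rfl key]
    simp [Nat.card_Icc]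

lemma sum_swap_tri (N : ℕ) (g : ℕ → ℕ → ℝ) :
    ∑ i ∈ Finset.Icc 1 N, ∑ j ∈ Finset.Icc 1 i, g i j
      = ∑ j ∈ Finset.Icc 1 N, ∑ i ∈ Finset.Icc j N, g i j := by
  rw [Finset.sum_sigma', Finset.sum_sigma']
  apply Finset.sum_nbij' (fun p => ⟨p.2, p.1⟩) (fun p => ⟨p.2, p.1⟩) <;>
    simp +contextual [Finset.mem_sigma, Finset.mem_Icc] <;> omega

/-- For every `n ≥ 1` with `F(n) > 0`, `t ↦ R(t,n)` is differentiable on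
`[0,∞)` and satisfies `(1/λ) ∂R(t,n)/∂t = -(∑_{i=1}^n F(i)) R(t,n) + 2 ∑_{i=1}^{n-1} F(n-i) R(t,i)`
with `R(0,n) = n`; and if `F(n) = 0` then `R(t,n) = n` satisfies the same equation trivially. -/
theorem stmt_0
    (m : ℕ) (hm : 1 ≤ m) (f : ℕ → ℝ)
    (hf_nonneg : ∀ k, 0 ≤ f k)
    (hf_sum : ∑ k ∈ Finset.Icc 1 m, f k = 1)
    (hf_supp : ∀ k : ℕ, k = 0 ∨ m < k → f k = 0)
    (lam : ℝ) (hlam : 0 < lam)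
    (γ : ℕ → ℕ → ℝ)
    (hγ_zero : ∀ n j : ℕ, cdfF f n = 0 → 1 ≤ j → j ≤ n → γ n j = 1)
    (hγ_rec : ∀ n i : ℕ, 0 < cdfF f n → 1 ≤ i → i < n →
      γ n i = 2 * (∑ j ∈ Finset.Icc 1 (n - i), cdfF f j * γ (n - j) i) /
        (∑ k ∈ Finset.Icc (i + 1) n, cdfF f k))
    (hγ_diag : ∀ n : ℕ, 0 < cdfF f n →
      γ n n = (n : ℝ) - ∑ i ∈ Finset.Icc 1 (n - 1), γ n i)
    (n : ℕ) (hn : 1 ≤ n) :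
    (0 < cdfF f n →
      (∀ t : ℝ, 0 ≤ t →
        HasDerivAt (fun s => Rfun f γ lam s n)
          (lam * (-(∑ i ∈ Finset.Icc 1 n, cdfF f i) * Rfun f γ lam t n
            + 2 * ∑ i ∈ Finset.Icc 1 (n - 1), cdfF f (n - i) * Rfun f γ lam t i)) t)
      ∧ Rfun f γ lam 0 n = (n : ℝ))
    ∧ (cdfF f n = 0 →
      (∀ t : ℝ, 0 ≤ t → Rfun f γ lam t n = (n : ℝ))
      ∧ (∀ t : ℝ, 0 ≤ t →
        HasDerivAt (fun s => Rfun f γ lam s n)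
          (lam * (-(∑ i ∈ Finset.Icc 1 n, cdfF f i) * Rfun f γ lam t n
            + 2 * ∑ i ∈ Finset.Icc 1 (n - 1), cdfF f (n - i) * Rfun f γ lam t i)) t)) := by
  obtain ⟨M, rfl⟩ : ∃ M, n = M + 1 := ⟨n - 1, by omega⟩
  set n := M + 1 with hndef
  set S : ℕ → ℝ := fun i => ∑ j ∈ Finset.Icc 1 i, cdfF f j with hS
  set c : ℕ → ℝ := fun i => -(lam * S i) with hc
  constructor
  · intro hpos
    -- denominator positivity and rearranged recursion
    have hrec' : ∀ j : ℕ, 1 ≤ j → j < n →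
        2 * ∑ k ∈ Finset.Icc 1 (n - j), cdfF f k * γ (n - k) j
          = γ n j * (S n - S j) := by
      intro j hj1 hjn
      have hD : S n - S j = ∑ k ∈ Finset.Icc (j + 1) n, cdfF f k := by
        have h1 : Finset.Icc 1 n = Finset.Ioc 0 n := by
          rw [← Finset.Icc_add_one_left_eq_Ioc, zero_add]
        have h2 : Finset.Icc 1 j = Finset.Ioc 0 j := by
          rw [← Finset.Icc_add_one_left_eq_Ioc, zero_add]
        have h3 : Finset.Icc (j + 1) n = Finset.Ioc j n := by
          rw [← Finset.Icc_add_one_left_eq_Ioc]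
        have h4 := Finset.sum_Ioc_consecutive (cdfF f) (Nat.zero_le j) (le_of_lt hjn)
        simp only [hS, h1, h2, h3]
        linarith [h4]
      have hDpos : 0 < ∑ k ∈ Finset.Icc (j + 1) n, cdfF f k := by
        have hmem : n ∈ Finset.Icc (j + 1) n := by
          simp [Finset.mem_Icc]; omega
        calc 0 < cdfF f n := hpos
        _ ≤ _ := Finset.single_le_sum (f := cdfF f) (fun k _ => cdfF_nonneg hf_nonneg k) hmem
      rw [hD, hγ_rec n j hpos hj1 hjn, div_mul_cancel₀ _ (ne_of_gt hDpos)]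
    constructor
    · intro t _
      -- the exact derivative of the explicit sum
      have key : HasDerivAt (fun s => Rfun f γ lam s n)
          (∑ i ∈ Finset.Icc 1 n, γ n i * (Real.exp (c i * t) * c i)) t := by
        have hfn : (fun s => Rfun f γ lam s n)
            = fun s => ∑ i ∈ Finset.Icc 1 n, γ n i * Real.exp (c i * s) := by
          funext s
          rw [Rfun, if_pos hpos]
        rw [hfn]
        apply HasDerivAt.fun_sum
        intro i _
        have h1 : HasDerivAt (fun s : ℝ => c i * s) (c i) t := by
          simpa using (hasDerivAt_id t).const_mul (c i)
        exact h1.exp.const_mul (γ n i)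
      have hval : lam * (-(∑ i ∈ Finset.Icc 1 n, cdfF f i) * Rfun f γ lam t n
            + 2 * ∑ i ∈ Finset.Icc 1 (n - 1), cdfF f (n - i) * Rfun f γ lam t i)
          = ∑ i ∈ Finset.Icc 1 n, γ n i * (Real.exp (c i * t) * c i) := by
        -- abbreviations
        set E : ℕ → ℝ := fun i => Real.exp (c i * t) with hE
        have hRsum : ∀ i : ℕ, Rfun f γ lam t i = ∑ j ∈ Finset.Icc 1 i, γ i j * E j := by
          intro i
          exact Rfun_eq_sum hf_nonneg hγ_zero lam t i
        -- step: compute the convolution term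
        have hconv : 2 * ∑ i ∈ Finset.Icc 1 (n - 1), cdfF f (n - i) * Rfun f γ lam t i
            = ∑ j ∈ Finset.Icc 1 (n - 1), γ n j * (S n - S j) * E j := by
          calc 2 * ∑ i ∈ Finset.Icc 1 (n - 1), cdfF f (n - i) * Rfun f γ lam t i
              = ∑ i ∈ Finset.Icc 1 (n - 1), ∑ j ∈ Finset.Icc 1 i,
                  2 * (cdfF f (n - i) * (γ i j * E j)) := by
                rw [Finset.mul_sum]
                apply Finset.sum_congr rfl
                intro i _
                rw [hRsum i, Finset.mul_sum, Finset.mul_sum]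
            _ = ∑ j ∈ Finset.Icc 1 (n - 1), ∑ i ∈ Finset.Icc j (n - 1),
                  2 * (cdfF f (n - i) * (γ i j * E j)) := sum_swap_tri _ _
            _ = ∑ j ∈ Finset.Icc 1 (n - 1),
                  (2 * ∑ k ∈ Finset.Icc 1 (n - j), cdfF f k * γ (n - k) j) * E j := by
                apply Finset.sum_congr rfl
                intro j hj
                simp only [Finset.mem_Icc] at hj
                rw [Finset.mul_sum, Finset.sum_mul]
                apply Finset.sum_nbij' (fun i => n - i) (fun k => n - k)
                · intro i hi; simp only [Finset.mem_Icc] at *; omega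
                · intro k hk; simp only [Finset.mem_Icc] at *; omega
                · intro i hi; simp only [Finset.mem_Icc] at hi; omega
                · intro k hk; simp only [Finset.mem_Icc] at hk; omega
                · intro i hi
                  simp only [Finset.mem_Icc] at hi
                  have : n - (n - i) = i := by omega
                  rw [this]
                  ring
            _ = ∑ j ∈ Finset.Icc 1 (n - 1), γ n j * (S n - S j) * E j := by
                apply Finset.sum_congr rfl
                intro j hj
                simp only [Finset.mem_Icc] at hj
                rw [hrec' j hj.1 (by omega)]
        rw [hconv, hRsum n]
        -- now split the Icc 1 n sums at the top
        have hsplit : ∀ g : ℕ → ℝ, ∑ i ∈ Finset.Icc 1 n, g i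
            = (∑ i ∈ Finset.Icc 1 (n - 1), g i) + g n := by
          intro g
          have h : n - 1 + 1 = n := by omega
          calc ∑ i ∈ Finset.Icc 1 n, g i = ∑ i ∈ Finset.Icc 1 (n - 1 + 1), g i := by rw [h]
            _ = ∑ i ∈ Finset.Icc 1 (n - 1), g i + g (n - 1 + 1) :=
                Finset.sum_Icc_succ_top (by omega) g
            _ = ∑ i ∈ Finset.Icc 1 (n - 1), g i + g n := by rw [h]
        rw [hsplit (fun i => γ n i * E i), hsplit (fun i => γ n i * (E i * c i))]
        have hSn : (∑ i ∈ Finset.Icc 1 n, cdfF f i) = S n := rfl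
        rw [hSn]
        have hAB : lam * (-(S n)) * (∑ i ∈ Finset.Icc 1 (n - 1), γ n i * E i)
              + lam * ∑ j ∈ Finset.Icc 1 (n - 1), γ n j * (S n - S j) * E j
            = ∑ i ∈ Finset.Icc 1 (n - 1), γ n i * (E i * c i) := by
          rw [Finset.mul_sum, Finset.mul_sum, ← Finset.sum_add_distrib]
          apply Finset.sum_congr rfl
          intro j _
          simp only [hc]
          ring
        have hcn : c n = -(lam * S n) := rfl
        rw [hcn] at *
        linear_combination hAB
      rw [hval]
      exact key
    · -- boundary condition
      rw [Rfun, if_pos hpos]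
      have hsplit : ∀ g : ℕ → ℝ, ∑ i ∈ Finset.Icc 1 n, g i
          = (∑ i ∈ Finset.Icc 1 (n - 1), g i) + g n := by
        intro g
        have h : n - 1 + 1 = n := by omega
        calc ∑ i ∈ Finset.Icc 1 n, g i = ∑ i ∈ Finset.Icc 1 (n - 1 + 1), g i := by rw [h]
          _ = ∑ i ∈ Finset.Icc 1 (n - 1), g i + g (n - 1 + 1) :=
              Finset.sum_Icc_succ_top (by omega) g
          _ = ∑ i ∈ Finset.Icc 1 (n - 1), g i + g n := by rw [h]
      rw [hsplit]
      simp only [mul_zero, Real.exp_zero, mul_one]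
      rw [hγ_diag n hpos]
      ring
  · intro hzero
    have hzk : ∀ k ≤ n, cdfF f k = 0 := by
      intro k hk
      exact le_antisymm (hzero ▸ cdfF_mono hf_nonneg hk) (cdfF_nonneg hf_nonneg k)
    have hR : ∀ t : ℝ, Rfun f γ lam t n = (n : ℝ) := by
      intro t
      rw [Rfun, if_neg (by rw [hzero]; exact lt_irrefl 0)]
    refine ⟨fun t _ => hR t, fun t _ => ?_⟩
    have hfn : (fun s => Rfun f γ lam s n) = fun _ => (n : ℝ) := funext fun s => hR s
    have h1 : (∑ i ∈ Finset.Icc 1 n, cdfF f i) = 0 :=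
      Finset.sum_eq_zero fun i hi => hzk i (Finset.mem_Icc.mp hi).2
    have h2 : (∑ i ∈ Finset.Icc 1 (n - 1), cdfF f (n - i) * Rfun f γ lam t i) = 0 :=
      Finset.sum_eq_zero fun i hi => by rw [hzk (n - i) (by omega), zero_mul]
    rw [hfn, h1, h2]
    simpa using hasDerivAt_const t ((n : ℝ))
end
end

section
/- For every integer n ≥ m and every t ≥ 0, ∑_{k=1}^{m} f(k) ∫_{0}^{t} λ n e^{−λ n s} ( k + K(t−s, n−k) ) ds = C(t,n); that is, the expectation E[(B + K(t−T*, n−B)) 1(T* ≤ t)], where T* is exponentially distributed with rate λn and B is an independent random variable with mass function f, equals the closed form C(t,n) = n − ∑_{i=1}^{n−1} \tilde γ_{n,i} e^{−λ(∑_{j=1}^{i} F(j)) t} − \tilde γ_{n,n} e^{−λ n t}. -/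
open Finset MeasureTheory intervalIntegral Real Filter

noncomputable section

/-- `C(t,n)`: the expected number of packages picked up by time `t` starting from `n`
packages on a circle, in closed form via the constants `γ̃`. -/
def Cfun (f : ℕ → ℝ) (tγ : ℕ → ℕ → ℝ) (lam t : ℝ) (n : ℕ) : ℝ :=
  (n : ℝ)
    - (∑ i ∈ Finset.Icc 1 (n - 1),
        tγ n i * Real.exp (-(lam * ∑ j ∈ Finset.Icc 1 i, cdfF f j) * t))
    - tγ n n * Real.exp (-(lam * (n : ℝ)) * t)

lemma my_integral_exp_mul (c t : ℝ) (hc : c ≠ 0) :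
    ∫ s in (0:ℝ)..t, Real.exp (c * s) = (Real.exp (c * t) - 1) / c := by
  rw [integral_comp_mul_left (fun u => Real.exp u) hc]
  simp only [mul_zero, smul_eq_mul, integral_exp, Real.exp_zero]
  field_simp

lemma my_int_basic (b t : ℝ) (hb : b ≠ 0) :
    ∫ s in (0:ℝ)..t, b * Real.exp (-b * s) = 1 - Real.exp (-b * t) := by
  rw [intervalIntegral.integral_const_mul, my_integral_exp_mul (-b) t (neg_ne_zero.mpr hb)]
  rw [div_neg, mul_neg, mul_div_assoc', mul_comm, mul_div_assoc, div_self hb]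
  ring

lemma my_int_piece (a b t : ℝ) (hab : a < b) :
    ∫ s in (0:ℝ)..t, b * Real.exp (-b * s) * Real.exp (-a * (t - s))
      = b / (b - a) * (Real.exp (-a * t) - Real.exp (-b * t)) := by
  have h1 : ∀ s : ℝ, b * Real.exp (-b * s) * Real.exp (-a * (t - s))
      = (b * Real.exp (-a * t)) * Real.exp ((a - b) * s) := by
    intro s
    rw [mul_assoc, mul_assoc, ← Real.exp_add, ← Real.exp_add]
    ring_nf
  simp only [h1]
  rw [intervalIntegral.integral_const_mul, my_integral_exp_mul (a - b) t (by linarith)]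
  have hba : b - a ≠ 0 := by linarith
  have hab' : a - b ≠ 0 := by linarith
  have he : Real.exp (-a * t) * Real.exp ((a - b) * t) = Real.exp (-b * t) := by
    rw [← Real.exp_add]; congr 1; ring
  set E1 := Real.exp (-a * t)
  set E2 := Real.exp (-b * t)
  set E3 := Real.exp ((a - b) * t)
  field_simp
  linear_combination (b * (b - a)) * he

/-- For every `n ≥ m` and `t ≥ 0`,
`∑_{k=1}^m f(k) ∫_0^t λ n e^{-λ n s} (k + K(t-s, n-k)) ds = C(t,n)`, i.e. the expectation
`E[(B + K(t-T*, n-B)) 1(T* ≤ t)]` with `T* ~ Exp(λn)`, `B ~ f`, equals the closed form. -/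
theorem stmt_3
    (m : ℕ) (hm : 1 ≤ m) (f : ℕ → ℝ)
    (hf_nonneg : ∀ k, 0 ≤ f k)
    (hf_sum : ∑ k ∈ Finset.Icc 1 m, f k = 1)
    (hf_supp : ∀ k : ℕ, k = 0 ∨ m < k → f k = 0)
    (lam : ℝ) (hlam : 0 < lam)
    (γ : ℕ → ℕ → ℝ)
    (hγ_zero : ∀ n j : ℕ, cdfF f n = 0 → 1 ≤ j → j ≤ n → γ n j = 1)
    (hγ_rec : ∀ n i : ℕ, 0 < cdfF f n → 1 ≤ i → i < n →
      γ n i = 2 * (∑ j ∈ Finset.Icc 1 (n - i), cdfF f j * γ (n - j) i) /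
        (∑ k ∈ Finset.Icc (i + 1) n, cdfF f k))
    (hγ_diag : ∀ n : ℕ, 0 < cdfF f n →
      γ n n = (n : ℝ) - ∑ i ∈ Finset.Icc 1 (n - 1), γ n i)
    (tγ : ℕ → ℕ → ℝ)
    (htγ_rec : ∀ n i : ℕ, m ≤ n → 1 ≤ i → i ≤ n - 1 →
      tγ n i = (∑ k ∈ Finset.Icc 1 (n - i), f k * γ (n - k) i) /
        (1 - (1 / (n : ℝ)) * ∑ j ∈ Finset.Icc 1 i, cdfF f j))
    (htγ_diag : ∀ n : ℕ, m ≤ n →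
      tγ n n = (n : ℝ) - ∑ i ∈ Finset.Icc 1 (n - 1), tγ n i)
    (n : ℕ) (hn : m ≤ n) (t : ℝ) (ht : 0 ≤ t) :
    ∑ k ∈ Finset.Icc 1 m,
        f k * ∫ s in (0:ℝ)..t,
          lam * (n : ℝ) * Real.exp (-(lam * (n : ℝ)) * s) * ((k : ℝ) + Kfun f γ lam (t - s) (n - k))
      = Cfun f tγ lam t n := by
  have hn1 : 1 ≤ n := le_trans hm hn
  have hnpos : (0:ℝ) < n := by exact_mod_cast hn1
  have hbpos : 0 < lam * (n:ℝ) := mul_pos hlam hnpos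
  have hF0 : ∀ k, 0 ≤ cdfF f k := fun k => Finset.sum_nonneg fun j _ => hf_nonneg j
  have hFmono : ∀ {j k : ℕ}, j ≤ k → cdfF f j ≤ cdfF f k := fun {j k} h =>
    Finset.sum_le_sum_of_subset_of_nonneg (Finset.Icc_subset_Icc_right h) fun i _ _ => hf_nonneg i
  have hfz : ∀ k, m < k → f k = 0 := fun k h => hf_supp k (Or.inr h)
  have hFm : ∀ j, m ≤ j → cdfF f j = 1 := by
    intro j hj
    rw [← hf_sum]
    exact (Finset.sum_subset (Finset.Icc_subset_Icc_right hj) fun x hx hx' =>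
      hfz x (by simp only [Finset.mem_Icc] at hx hx'; omega)).symm
  have hF1 : ∀ j, cdfF f j ≤ 1 := by
    intro j
    rcases le_or_gt m j with h | h
    · exact (hFm j h).le
    · exact le_trans (hFmono h.le) (hFm m le_rfl).le
  have hSle : ∀ i : ℕ, (∑ j ∈ Finset.Icc 1 i, cdfF f j) ≤ (i : ℝ) := by
    intro i
    calc (∑ j ∈ Finset.Icc 1 i, cdfF f j) ≤ ∑ j ∈ Finset.Icc 1 i, 1 :=
        Finset.sum_le_sum fun j _ => hF1 j
      _ = (i : ℝ) := by simp
  have hS0 : ∀ i : ℕ, 0 ≤ (∑ j ∈ Finset.Icc 1 i, cdfF f j) :=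
    fun i => Finset.sum_nonneg fun j _ => hF0 j
  -- S i < n for i ≤ n - 1
  have hSlt : ∀ i : ℕ, i ≤ n - 1 → (∑ j ∈ Finset.Icc 1 i, cdfF f j) < (n : ℝ) := by
    intro i hi
    refine lt_of_le_of_lt (hSle i) ?_
    have : (i : ℝ) ≤ (n : ℝ) - 1 := by
      have : (i : ℕ) + 1 ≤ n := by omega
      have := Nat.cast_le (α := ℝ).mpr this
      push_cast at this ⊢; linarith
    linarith
  -- R unconditional closed form
  have hR : ∀ (τ : ℝ) (N : ℕ),
      Rfun f γ lam τ N
        = ∑ i ∈ Finset.Icc 1 N, γ N i *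
            Real.exp (-(lam * ∑ j ∈ Finset.Icc 1 i, cdfF f j) * τ) := by
    intro τ N
    rw [Rfun]
    split_ifs with h
    · rfl
    · have hN0 : cdfF f N = 0 := le_antisymm (not_lt.mp h) (hF0 N)
      have hone : ∀ i ∈ Finset.Icc 1 N,
          γ N i * Real.exp (-(lam * ∑ j ∈ Finset.Icc 1 i, cdfF f j) * τ) = 1 := by
        intro i hi
        simp only [Finset.mem_Icc] at hi
        have hSi : (∑ j ∈ Finset.Icc 1 i, cdfF f j) = 0 := by
          refine le_antisymm ?_ (hS0 i)
          calc (∑ j ∈ Finset.Icc 1 i, cdfF f j)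
              ≤ ∑ j ∈ Finset.Icc 1 i, cdfF f N := by
                refine Finset.sum_le_sum fun j hj => ?_
                simp only [Finset.mem_Icc] at hj
                rw [← hN0] at *
                exact hFmono (le_trans hj.2 hi.2)
            _ = 0 := by simp [hN0]
        rw [hγ_zero N i hN0 hi.1 hi.2, hSi]
        simp
      rw [Finset.sum_congr rfl hone]
      simp
  -- key integral computation
  have key : ∀ k : ℕ, 1 ≤ k → k ≤ n →
      (∫ s in (0:ℝ)..t, lam * (n : ℝ) * Real.exp (-(lam * (n : ℝ)) * s)
          * ((k : ℝ) + Kfun f γ lam (t - s) (n - k)))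
      = (n:ℝ) * (1 - Real.exp (-(lam * (n:ℝ)) * t))
        - ∑ i ∈ Finset.Icc 1 (n - k), γ (n - k) i *
            ((lam * (n:ℝ)) / (lam * (n:ℝ) - lam * ∑ j ∈ Finset.Icc 1 i, cdfF f j)
              * (Real.exp (-(lam * ∑ j ∈ Finset.Icc 1 i, cdfF f j) * t)
                  - Real.exp (-(lam * (n:ℝ)) * t))) := by
    intro k hk1 hkn
    have hcast : ((n - k : ℕ) : ℝ) = (n:ℝ) - (k:ℝ) := by
      push_cast [hkn]; ring
    have hsum : ∀ s : ℝ,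
        (lam * (n:ℝ) * Real.exp (-(lam * (n:ℝ)) * s)) *
          ∑ i ∈ Finset.Icc 1 (n - k), γ (n - k) i *
            Real.exp (-(lam * ∑ j ∈ Finset.Icc 1 i, cdfF f j) * (t - s))
        = ∑ i ∈ Finset.Icc 1 (n - k), γ (n - k) i *
            (lam * (n:ℝ) * Real.exp (-(lam * (n:ℝ)) * s) *
              Real.exp (-(lam * ∑ j ∈ Finset.Icc 1 i, cdfF f j) * (t - s))) := by
      intro s
      rw [Finset.mul_sum]
      exact Finset.sum_congr rfl fun i _ => by ring
    have hint : ∀ s : ℝ,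
        lam * (n : ℝ) * Real.exp (-(lam * (n : ℝ)) * s) * ((k : ℝ) + Kfun f γ lam (t - s) (n - k))
        = (n:ℝ) * (lam * (n:ℝ) * Real.exp (-(lam * (n:ℝ)) * s))
          - ∑ i ∈ Finset.Icc 1 (n - k), γ (n - k) i *
              (lam * (n:ℝ) * Real.exp (-(lam * (n:ℝ)) * s) *
                Real.exp (-(lam * ∑ j ∈ Finset.Icc 1 i, cdfF f j) * (t - s))) := by
      intro s
      rw [Kfun, hR (t - s) (n - k), hcast, ← hsum s]
      ring
    rw [intervalIntegral.integral_congr (g := fun s =>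
        (n:ℝ) * (lam * (n:ℝ) * Real.exp (-(lam * (n:ℝ)) * s))
          - ∑ i ∈ Finset.Icc 1 (n - k), γ (n - k) i *
              (lam * (n:ℝ) * Real.exp (-(lam * (n:ℝ)) * s) *
                Real.exp (-(lam * ∑ j ∈ Finset.Icc 1 i, cdfF f j) * (t - s))))
        (fun s _ => hint s)]
    have hc1 : IntervalIntegrable
        (fun s => (n:ℝ) * (lam * (n:ℝ) * Real.exp (-(lam * (n:ℝ)) * s))) volume 0 t :=
      (by fun_prop : Continuous fun s : ℝ =>
        (n:ℝ) * (lam * (n:ℝ) * Real.exp (-(lam * (n:ℝ)) * s))).intervalIntegrable 0 t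
    have hc2 : ∀ i ∈ Finset.Icc 1 (n - k), IntervalIntegrable
        (fun s => γ (n - k) i *
          (lam * (n:ℝ) * Real.exp (-(lam * (n:ℝ)) * s) *
            Real.exp (-(lam * ∑ j ∈ Finset.Icc 1 i, cdfF f j) * (t - s)))) volume 0 t := by
      intro i _
      exact (by fun_prop : Continuous fun s : ℝ => γ (n - k) i *
        (lam * (n:ℝ) * Real.exp (-(lam * (n:ℝ)) * s) *
          Real.exp (-(lam * ∑ j ∈ Finset.Icc 1 i, cdfF f j) * (t - s)))).intervalIntegrable 0 t
    have hc3 : IntervalIntegrable (fun s => ∑ i ∈ Finset.Icc 1 (n - k), γ (n - k) i *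
          (lam * (n:ℝ) * Real.exp (-(lam * (n:ℝ)) * s) *
            Real.exp (-(lam * ∑ j ∈ Finset.Icc 1 i, cdfF f j) * (t - s)))) volume 0 t := by
      apply Continuous.intervalIntegrable
      exact continuous_finset_sum _ (fun i _ => by fun_prop)
    rw [intervalIntegral.integral_sub hc1 hc3,
      intervalIntegral.integral_const_mul, my_int_basic _ t hbpos.ne',
      intervalIntegral.integral_finset_sum hc2]
    congr 1
    refine Finset.sum_congr rfl fun i hi => ?_
    rw [intervalIntegral.integral_const_mul]
    have hab : lam * (∑ j ∈ Finset.Icc 1 i, cdfF f j) < lam * (n:ℝ) := by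
      refine (mul_lt_mul_iff_right₀ hlam).mpr (hSlt i ?_)
      simp only [Finset.mem_Icc] at hi
      omega
    rw [my_int_piece (lam * ∑ j ∈ Finset.Icc 1 i, cdfF f j) (lam * (n:ℝ)) t hab]
  -- main computation
  rw [Finset.sum_subset (Finset.Icc_subset_Icc_right hn) (fun x hx hx' => by
    rw [hfz x (by simp only [Finset.mem_Icc] at hx hx'; omega), zero_mul])]
  rw [Finset.sum_congr rfl (fun k hk => by
    rw [key k (Finset.mem_Icc.mp hk).1 (Finset.mem_Icc.mp hk).2])]
  have hsum1 : ∑ k ∈ Finset.Icc 1 n, f k = 1 := by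
    rw [← hf_sum]
    exact (Finset.sum_subset (Finset.Icc_subset_Icc_right hn) fun x hx hx' =>
      hfz x (by simp only [Finset.mem_Icc] at hx hx'; omega)).symm
  have step : ∀ k ∈ Finset.Icc 1 n,
      f k * ((n:ℝ) * (1 - Real.exp (-(lam * (n:ℝ)) * t))
        - ∑ i ∈ Finset.Icc 1 (n - k), γ (n - k) i *
            ((lam * (n:ℝ)) / (lam * (n:ℝ) - lam * ∑ j ∈ Finset.Icc 1 i, cdfF f j)
              * (Real.exp (-(lam * ∑ j ∈ Finset.Icc 1 i, cdfF f j) * t)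
                  - Real.exp (-(lam * (n:ℝ)) * t))))
      = f k * ((n:ℝ) * (1 - Real.exp (-(lam * (n:ℝ)) * t)))
        - ∑ i ∈ Finset.Icc 1 (n - k), f k * (γ (n - k) i *
            ((lam * (n:ℝ)) / (lam * (n:ℝ) - lam * ∑ j ∈ Finset.Icc 1 i, cdfF f j)
              * (Real.exp (-(lam * ∑ j ∈ Finset.Icc 1 i, cdfF f j) * t)
                  - Real.exp (-(lam * (n:ℝ)) * t)))) := by
    intro k _
    rw [mul_sub, Finset.mul_sum]
  rw [Finset.sum_congr rfl step, Finset.sum_sub_distrib, ← Finset.sum_mul, hsum1, one_mul]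
  -- swap the double sum
  have hswap : ∀ T : ℕ → ℕ → ℝ,
      (∑ k ∈ Finset.Icc 1 n, ∑ i ∈ Finset.Icc 1 (n - k), T k i)
        = ∑ i ∈ Finset.Icc 1 n, ∑ k ∈ Finset.Icc 1 (n - i), T k i := by
    intro T
    have h1 : ∀ k ∈ Finset.Icc 1 n, ∑ i ∈ Finset.Icc 1 (n - k), T k i
        = ∑ i ∈ Finset.Icc 1 n, if k + i ≤ n then T k i else 0 := by
      intro k hk
      simp only [Finset.mem_Icc] at hk
      rw [← Finset.sum_filter]
      congr 1
      ext i
      simp only [Finset.mem_Icc, Finset.mem_filter]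
      omega
    have h2 : ∀ i ∈ Finset.Icc 1 n, ∑ k ∈ Finset.Icc 1 (n - i), T k i
        = ∑ k ∈ Finset.Icc 1 n, if k + i ≤ n then T k i else 0 := by
      intro i hi
      simp only [Finset.mem_Icc] at hi
      rw [← Finset.sum_filter]
      congr 1
      ext k
      simp only [Finset.mem_Icc, Finset.mem_filter]
      omega
    rw [Finset.sum_congr rfl h1, Finset.sum_comm, Finset.sum_congr rfl h2]
  rw [hswap]
  -- drop the i = n term (empty inner sum)
  rw [← Finset.sum_subset (Finset.Icc_subset_Icc_right (Nat.sub_le n 1))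
    (fun i hi hi' => by
      have : n - i = 0 := by
        simp only [Finset.mem_Icc] at hi hi'; omega
      rw [this]
      simp)]
  -- identify each inner sum with tγ
  have hinner : ∀ i ∈ Finset.Icc 1 (n - 1),
      (∑ k ∈ Finset.Icc 1 (n - i), f k * (γ (n - k) i *
          ((lam * (n:ℝ)) / (lam * (n:ℝ) - lam * ∑ j ∈ Finset.Icc 1 i, cdfF f j)
            * (Real.exp (-(lam * ∑ j ∈ Finset.Icc 1 i, cdfF f j) * t)
                - Real.exp (-(lam * (n:ℝ)) * t)))))
      = tγ n i * (Real.exp (-(lam * ∑ j ∈ Finset.Icc 1 i, cdfF f j) * t)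
                - Real.exp (-(lam * (n:ℝ)) * t)) := by
    intro i hi
    simp only [Finset.mem_Icc] at hi
    rw [htγ_rec n i hn hi.1 hi.2]
    have hSn : (∑ j ∈ Finset.Icc 1 i, cdfF f j) < (n:ℝ) := hSlt i hi.2
    have hd1 : lam * (n:ℝ) - lam * (∑ j ∈ Finset.Icc 1 i, cdfF f j) ≠ 0 := by
      have := (mul_lt_mul_iff_right₀ hlam).mpr hSn
      linarith
    have hd2 : 1 - (1 / (n:ℝ)) * (∑ j ∈ Finset.Icc 1 i, cdfF f j) ≠ 0 := by
      have h := (div_lt_one hnpos).mpr hSn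
      rw [one_div]
      intro hcon
      rw [sub_eq_zero] at hcon
      rw [inv_mul_eq_div] at hcon
      linarith
    have hsum2 : (∑ k ∈ Finset.Icc 1 (n - i), f k * (γ (n - k) i *
          ((lam * (n:ℝ)) / (lam * (n:ℝ) - lam * ∑ j ∈ Finset.Icc 1 i, cdfF f j)
            * (Real.exp (-(lam * ∑ j ∈ Finset.Icc 1 i, cdfF f j) * t)
                - Real.exp (-(lam * (n:ℝ)) * t)))))
        = (∑ k ∈ Finset.Icc 1 (n - i), f k * γ (n - k) i) *
          ((lam * (n:ℝ)) / (lam * (n:ℝ) - lam * ∑ j ∈ Finset.Icc 1 i, cdfF f j)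
            * (Real.exp (-(lam * ∑ j ∈ Finset.Icc 1 i, cdfF f j) * t)
                - Real.exp (-(lam * (n:ℝ)) * t))) := by
      rw [Finset.sum_mul]
      exact Finset.sum_congr rfl fun _ _ => (mul_assoc _ _ _).symm
    have hd3 : (n:ℝ) - (∑ j ∈ Finset.Icc 1 i, cdfF f j) ≠ 0 := by linarith
    rw [hsum2]
    field_simp
  rw [Finset.sum_congr rfl hinner, Cfun, htγ_diag n hn]
  simp only [mul_sub]
  rw [Finset.sum_sub_distrib, ← Finset.sum_mul]
  ring
end
end

section
/- Suppose f(m) = 1 (so F(i) = 0 for i < m and m > 1). Then for every λ > 0, lim_{t→∞} α(t,λ) = m ∫_{0}^{1} e^{2(φ(u) − φ(1))} du, where in this case φ(y) = ∑_{j=1}^{m−1} y^j / j; equivalently the limit equals m e^{−2∑_{j=1}^{m−1} 1/j} ∫_0^1 e^{2∑_{j=1}^{m−1} u^j/j} du. -/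
open Finset MeasureTheory intervalIntegral Real Filter

noncomputable section

/-- `φ(y) = ∑_{i=1}^{m-1} ((1-F(i))/i) y^i`. -/
def phiF (f : ℕ → ℝ) (m : ℕ) (y : ℝ) : ℝ :=
  ∑ i ∈ Finset.Icc 1 (m - 1), ((1 - cdfF f i) / (i : ℝ)) * y ^ i

/-- `φ'(y) = ∑_{i=1}^{m-1} (1-F(i)) y^(i-1)` (so `φ'(1) = ∑_{i=1}^{m-1} (1-F(i))`). -/
def phiDeriv (f : ℕ → ℝ) (m : ℕ) (y : ℝ) : ℝ :=
  ∑ i ∈ Finset.Icc 1 (m - 1), (1 - cdfF f i) * y ^ (i - 1)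

/-- `q̂(s,v)`. -/
def qhat (f : ℕ → ℝ) (γ : ℕ → ℕ → ℝ) (lam : ℝ) (m : ℕ) (s v : ℝ) : ℝ :=
  2 * v ^ ((m : ℝ) - phiDeriv f m 1 - 1) * (1 - v) *
      (∑ i ∈ Finset.Icc 1 (m - 1), Rfun f γ lam s i)
  - 2 * (1 - v) ^ 2 *
      ∑ i ∈ Finset.Icc 1 (m - 1), Rfun f γ lam s i *
        ∑ j ∈ Finset.Icc (m - i) (m - 1),
          (1 - cdfF f j) * v ^ ((i : ℝ) + (j : ℝ) - phiDeriv f m 1 - 1)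

/-- `α(t,λ)`, the asymptotic proportion of delivered packages by time `t`. -/
def alphaF (f : ℕ → ℝ) (γ : ℕ → ℕ → ℝ) (lam : ℝ) (m : ℕ) (t : ℝ) : ℝ :=
  1 - (∫ u in Real.exp (-(lam * t))..1,
        Real.exp (2 * (phiF f m u - phiF f m 1)) * qhat f γ lam m (t + Real.log u / lam) u)
    - ((m : ℝ) - ((m : ℝ) - 1) * Real.exp (-(lam * t))) *
        Real.exp (2 * (phiF f m (Real.exp (-(lam * t))) - phiF f m 1)
          - lam * t * ((m : ℝ) - phiDeriv f m 1))

/-- auxiliary: the integrand `e^{2(φ(u)-φ(1))}`. -/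
def gaux (f : ℕ → ℝ) (m : ℕ) (u : ℝ) : ℝ := Real.exp (2 * (phiF f m u - phiF f m 1))

lemma gaux_eq (f : ℕ → ℝ) (m : ℕ) (u : ℝ) :
    Real.exp (2 * (phiF f m u - phiF f m 1)) = gaux f m u := rfl

lemma sum_Icc_one' {M : Type*} [AddCommMonoid M] (n : ℕ) (F : ℕ → M) :
    ∑ i ∈ Finset.Icc 1 n, F i = ∑ i ∈ Finset.range n, F (i + 1) := by
  rw [← Finset.Ico_add_one_right_eq_Icc, Finset.sum_Ico_eq_sum_range]
  simp [add_comm]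

lemma poly_id' (n : ℕ) (u : ℝ) :
    (((n : ℝ) + 1) - n * u) * u * (∑ k ∈ Finset.range n, u ^ k) - n * u
      = (1 - u) * ∑ k ∈ Finset.range n, ((k : ℝ) + 1) * u ^ (k + 1) := by
  induction n with
  | zero => simp
  | succ n ih =>
    have hg : (1 - u) * ∑ k ∈ Finset.range n, u ^ k = 1 - u ^ n := by
      have h := geom_sum_mul u n
      linarith [h]
    rw [Finset.sum_range_succ, Finset.sum_range_succ]
    push_cast
    linear_combination ih + u * hg


/-- If `f(m) = 1` (so `F(i) = 0` for `i < m`, and `m > 1`), then for the fixed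
`λ > 0`, `lim_{t→∞} α(t,λ) = m ∫_0^1 e^{2(φ(u)-φ(1))} du`, where in this case
`φ(y) = ∑_{j=1}^{m-1} y^j/j`; equivalently the limit equals
`m e^{-2∑_{j=1}^{m-1} 1/j} ∫_0^1 e^{2∑_{j=1}^{m-1} u^j/j} du`. -/
theorem stmt_7
    (m : ℕ) (hm : 1 ≤ m) (f : ℕ → ℝ)
    (hf_nonneg : ∀ k, 0 ≤ f k)
    (hf_sum : ∑ k ∈ Finset.Icc 1 m, f k = 1)
    (hf_supp : ∀ k : ℕ, k = 0 ∨ m < k → f k = 0)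
    (lam : ℝ) (hlam : 0 < lam)
    (γ : ℕ → ℕ → ℝ)
    (hγ_zero : ∀ n j : ℕ, cdfF f n = 0 → 1 ≤ j → j ≤ n → γ n j = 1)
    (hγ_rec : ∀ n i : ℕ, 0 < cdfF f n → 1 ≤ i → i < n →
      γ n i = 2 * (∑ j ∈ Finset.Icc 1 (n - i), cdfF f j * γ (n - j) i) /
        (∑ k ∈ Finset.Icc (i + 1) n, cdfF f k))
    (hγ_diag : ∀ n : ℕ, 0 < cdfF f n →
      γ n n = (n : ℝ) - ∑ i ∈ Finset.Icc 1 (n - 1), γ n i)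
    (hm1 : 1 < m) (hfm : f m = 1) :
    (∀ y : ℝ, phiF f m y = ∑ j ∈ Finset.Icc 1 (m - 1), y ^ j / (j : ℝ))
    ∧ Filter.Tendsto (fun t : ℝ => alphaF f γ lam m t) Filter.atTop
        (nhds ((m : ℝ) * ∫ u in (0:ℝ)..1, Real.exp (2 * (phiF f m u - phiF f m 1))))
    ∧ (m : ℝ) * (∫ u in (0:ℝ)..1, Real.exp (2 * (phiF f m u - phiF f m 1)))
        = (m : ℝ) * Real.exp (-2 * ∑ j ∈ Finset.Icc 1 (m - 1), 1 / (j : ℝ)) *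
            ∫ u in (0:ℝ)..1, Real.exp (2 * ∑ j ∈ Finset.Icc 1 (m - 1), u ^ j / (j : ℝ)) := by
  obtain ⟨n, rfl⟩ : ∃ n, m = n + 1 := ⟨m - 1, by omega⟩
  have hn : 1 ≤ n := by omega
  -- f vanishes on 1..n
  have hf0 : ∀ j ∈ Finset.Icc 1 n, f j = 0 := by
    have hsum : ∑ j ∈ Finset.Icc 1 n, f j = 0 := by
      have h := hf_sum
      rw [Finset.sum_Icc_succ_top (by omega)] at h
      rw [hfm] at h; linarith
    exact fun j hj => (Finset.sum_eq_zero_iff_of_nonneg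
      (fun i _ => hf_nonneg i)).1 hsum j hj
  have hcdf : ∀ k, k ≤ n → cdfF f k = 0 := by
    intro k hk
    apply Finset.sum_eq_zero
    intro j hj
    simp only [Finset.mem_Icc] at hj
    exact hf0 j (Finset.mem_Icc.2 ⟨hj.1, hj.2.trans hk⟩)
  have hphi : ∀ y : ℝ, phiF f (n + 1) y = ∑ j ∈ Finset.Icc 1 n, y ^ j / (j : ℝ) := by
    intro y
    unfold phiF
    simp only [Nat.add_sub_cancel]
    refine Finset.sum_congr rfl fun i hi => ?_
    rw [hcdf i (Finset.mem_Icc.1 hi).2]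
    ring
  have hpd : phiDeriv f (n + 1) 1 = (n : ℝ) := by
    unfold phiDeriv
    simp only [Nat.add_sub_cancel]
    have h1 : ∀ i ∈ Finset.Icc 1 n, (1 - cdfF f i) * (1:ℝ) ^ (i - 1) = 1 := by
      intro i hi
      rw [hcdf i (Finset.mem_Icc.1 hi).2]; simp
    rw [Finset.sum_congr rfl h1]
    simp [Nat.card_Icc]
  have hR : ∀ (s : ℝ) (i : ℕ), i ≤ n → Rfun f γ lam s i = (i : ℝ) := by
    intro s i hi
    unfold Rfun
    rw [hcdf i hi]
    simp
  -- closed form of qhat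
  have hq : ∀ s v : ℝ, qhat f γ lam (n + 1) s v
      = 2 * (1 - v) * ∑ i ∈ Finset.Icc 1 n, (i : ℝ) * v ^ i := by
    intro s v
    unfold qhat
    simp only [Nat.add_sub_cancel, hpd]
    have he0 : ((n + 1 : ℕ) : ℝ) - (n : ℝ) - 1 = 0 := by push_cast; ring
    rw [he0, Real.rpow_zero]
    rw [Finset.sum_congr rfl (fun i hi => hR s i (Finset.mem_Icc.1 hi).2)]
    have hinner : ∀ i ∈ Finset.Icc 1 n,
        Rfun f γ lam s i *
          ∑ j ∈ Finset.Icc (n + 1 - i) n,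
            (1 - cdfF f j) * v ^ ((i : ℝ) + (j : ℝ) - (n : ℝ) - 1)
        = (i : ℝ) * ∑ k ∈ Finset.range i, v ^ k := by
      intro i hi
      obtain ⟨hi1, hi2⟩ := Finset.mem_Icc.1 hi
      rw [hR s i hi2]
      congr 1
      have hterm : ∀ j ∈ Finset.Icc (n + 1 - i) n,
          (1 - cdfF f j) * v ^ ((i : ℝ) + (j : ℝ) - (n : ℝ) - 1)
            = v ^ (i + j - (n + 1)) := by
        intro j hj
        obtain ⟨hj1, hj2⟩ := Finset.mem_Icc.1 hj
        rw [hcdf j hj2]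
        have hle : n + 1 ≤ i + j := by omega
        have hcast : (i : ℝ) + (j : ℝ) - (n : ℝ) - 1 = ((i + j - (n + 1) : ℕ) : ℝ) := by
          rw [Nat.cast_sub hle]; push_cast; ring
        rw [hcast, Real.rpow_natCast]
        ring
      rw [Finset.sum_congr rfl hterm]
      rw [← Finset.Ico_add_one_right_eq_Icc, Finset.sum_Ico_eq_sum_range]
      have hcard : n + 1 - (n + 1 - i) = i := by omega
      rw [hcard]
      refine Finset.sum_congr rfl fun k hk => ?_
      have hk' := Finset.mem_range.1 hk
      congr 1
      omega
    rw [Finset.sum_congr rfl hinner]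
    have key : (1 - v) * ∑ i ∈ Finset.Icc 1 n, (i : ℝ) * ∑ k ∈ Finset.range i, v ^ k
        = (∑ i ∈ Finset.Icc 1 n, (i : ℝ)) - ∑ i ∈ Finset.Icc 1 n, (i : ℝ) * v ^ i := by
      rw [Finset.mul_sum, ← Finset.sum_sub_distrib]
      refine Finset.sum_congr rfl fun i _ => ?_
      have hgi : (1 - v) * ∑ k ∈ Finset.range i, v ^ k = 1 - v ^ i := by
        have h := geom_sum_mul v i; linarith
      linear_combination (i : ℝ) * hgi
    linear_combination (-2 * (1 - v)) * key
  -- continuity of gaux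
  have hgcont : Continuous (gaux f (n + 1)) := by
    unfold gaux phiF
    exact Real.continuous_exp.comp ((continuous_const.mul
      ((continuous_finset_sum _ fun i _ => continuous_const.mul (continuous_pow i)).sub
        continuous_const)))
  -- derivative of phiF
  have hphid : ∀ u : ℝ, HasDerivAt (fun y => phiF f (n + 1) y)
      (∑ j ∈ Finset.Icc 1 n, u ^ (j - 1)) u := by
    intro u
    rw [show (fun y => phiF f (n + 1) y) = fun y => ∑ j ∈ Finset.Icc 1 n, y ^ j / (j : ℝ)
      from funext hphi]
    apply HasDerivAt.fun_sum
    intro j hj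
    have hj1 : 1 ≤ j := (Finset.mem_Icc.1 hj).1
    have hj0 : (j : ℝ) ≠ 0 := Nat.cast_ne_zero.2 (by omega)
    have hd := (hasDerivAt_pow j u).div_const (j : ℝ)
    refine hd.congr_deriv ?_
    rw [mul_div_assoc] at *
    field_simp
  -- derivative of H
  have hH : ∀ u : ℝ, HasDerivAt
      (fun u : ℝ => (((n : ℝ) + 1) * u - (n : ℝ) * u ^ 2) * gaux f (n + 1) u)
      (gaux f (n + 1) u * (((n : ℝ) + 1) + 2 * (1 - u) * ∑ i ∈ Finset.Icc 1 n, (i : ℝ) * u ^ i))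
      u := by
    intro u
    have h1 : HasDerivAt (fun u : ℝ => ((n : ℝ) + 1) * u - (n : ℝ) * u ^ 2)
        (((n : ℝ) + 1) - (n : ℝ) * (2 * u)) u := by
      have ha := (hasDerivAt_id u).const_mul ((n : ℝ) + 1)
      have hb := (hasDerivAt_pow 2 u).const_mul (n : ℝ)
      refine (ha.sub hb).congr_deriv ?_
      push_cast; ring
    have h2 : HasDerivAt (gaux f (n + 1))
        (gaux f (n + 1) u * (2 * ∑ j ∈ Finset.Icc 1 n, u ^ (j - 1))) u := by
      have h3 := (((hphid u).sub_const (phiF f (n + 1) 1)).const_mul 2).exp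
      exact h3
    have h4 := h1.mul h2
    refine h4.congr_deriv ?_
    rw [sum_Icc_one' n (fun j => u ^ (j - 1)), sum_Icc_one' n (fun i => (i : ℝ) * u ^ i)]
    simp only [Nat.add_sub_cancel]
    have hpi := poly_id' n u
    push_cast
    linear_combination (2 * gaux f (n + 1) u) * hpi
  -- the exact formula for alphaF
  have halpha : ∀ t : ℝ, alphaF f γ lam (n + 1) t
      = ((n : ℝ) + 1) * ∫ u in Real.exp (-(lam * t))..1, gaux f (n + 1) u := by
    intro t
    have hvpos : (0 : ℝ) < Real.exp (-(lam * t)) := Real.exp_pos _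
    set v := Real.exp (-(lam * t)) with hv
    have hQcont : Continuous (fun u : ℝ =>
        gaux f (n + 1) u * (2 * (1 - u) * ∑ i ∈ Finset.Icc 1 n, (i : ℝ) * u ^ i)) := by
      exact hgcont.mul ((continuous_const.mul (continuous_const.sub continuous_id)).mul
        (continuous_finset_sum _ fun i _ => continuous_const.mul (continuous_pow i)))
    have hgl : IntervalIntegrable (gaux f (n + 1)) volume v 1 :=
      hgcont.intervalIntegrable v 1
    have hQl : IntervalIntegrable (fun u : ℝ =>
        gaux f (n + 1) u * (2 * (1 - u) * ∑ i ∈ Finset.Icc 1 n, (i : ℝ) * u ^ i)) volume v 1 :=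
      hQcont.intervalIntegrable v 1
    have hdint : IntervalIntegrable (fun u : ℝ => gaux f (n + 1) u *
        (((n : ℝ) + 1) + 2 * (1 - u) * ∑ i ∈ Finset.Icc 1 n, (i : ℝ) * u ^ i)) volume v 1 := by
      apply Continuous.intervalIntegrable
      exact hgcont.mul (continuous_const.add ((continuous_const.mul
        (continuous_const.sub continuous_id)).mul
        (continuous_finset_sum _ fun i _ => continuous_const.mul (continuous_pow i))))
    have hftc : ∫ u in v..1, gaux f (n + 1) u *
        (((n : ℝ) + 1) + 2 * (1 - u) * ∑ i ∈ Finset.Icc 1 n, (i : ℝ) * u ^ i)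
        = (((n : ℝ) + 1) * 1 - (n : ℝ) * 1 ^ 2) * gaux f (n + 1) 1
          - (((n : ℝ) + 1) * v - (n : ℝ) * v ^ 2) * gaux f (n + 1) v :=
      intervalIntegral.integral_eq_sub_of_hasDerivAt (fun u _ => hH u) hdint
    have hg1 : gaux f (n + 1) 1 = 1 := by
      unfold gaux; simp
    have hsplit : ∫ u in v..1, gaux f (n + 1) u *
        (((n : ℝ) + 1) + 2 * (1 - u) * ∑ i ∈ Finset.Icc 1 n, (i : ℝ) * u ^ i)
        = ((n : ℝ) + 1) * (∫ u in v..1, gaux f (n + 1) u)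
          + ∫ u in v..1, gaux f (n + 1) u *
              (2 * (1 - u) * ∑ i ∈ Finset.Icc 1 n, (i : ℝ) * u ^ i) := by
      rw [show (fun u : ℝ => gaux f (n + 1) u *
          (((n : ℝ) + 1) + 2 * (1 - u) * ∑ i ∈ Finset.Icc 1 n, (i : ℝ) * u ^ i))
        = fun u : ℝ => ((n : ℝ) + 1) * gaux f (n + 1) u
            + gaux f (n + 1) u * (2 * (1 - u) * ∑ i ∈ Finset.Icc 1 n, (i : ℝ) * u ^ i)
        from funext fun u => by ring]
      rw [intervalIntegral.integral_add (hgl.const_mul _) hQl,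
        intervalIntegral.integral_const_mul]
    -- now unfold alphaF
    unfold alphaF
    simp only [hq, hpd, gaux_eq, ← hv]
    have hb : Real.exp (2 * (phiF f (n + 1) v - phiF f (n + 1) 1)
        - lam * t * (((n + 1 : ℕ) : ℝ) - (n : ℝ)))
        = gaux f (n + 1) v * v := by
      rw [show (2 * (phiF f (n + 1) v - phiF f (n + 1) 1)
          - lam * t * (((n + 1 : ℕ) : ℝ) - (n : ℝ)))
        = 2 * (phiF f (n + 1) v - phiF f (n + 1) 1) + (-(lam * t)) from by push_cast; ring]
      rw [Real.exp_add]
      rfl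
    rw [hb]
    have hcast : ((n + 1 : ℕ) : ℝ) - 1 = (n : ℝ) := by push_cast; ring
    rw [hcast]
    have hfs : ∫ u in v..1, gaux f (n + 1) u *
        (2 * (1 - u) * ∑ i ∈ Finset.Icc 1 n, (i : ℝ) * u ^ i)
        = 1 - (((n : ℝ) + 1) * v - (n : ℝ) * v ^ 2) * gaux f (n + 1) v
          - ((n : ℝ) + 1) * (∫ u in v..1, gaux f (n + 1) u) := by
      have h := hftc
      rw [hsplit, hg1] at h
      linear_combination h
    rw [hfs]
    push_cast
    ring
  -- conclude
  refine ⟨by simpa using hphi, ?_, ?_⟩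
  · have hev : Tendsto (fun t : ℝ => Real.exp (-(lam * t))) atTop (nhds 0) := by
      apply Real.tendsto_exp_atBot.comp
      exact tendsto_neg_atTop_atBot.comp (tendsto_id.const_mul_atTop hlam)
    have hInt : ∀ a b : ℝ, IntervalIntegrable (gaux f (n + 1)) volume a b :=
      fun a b => hgcont.intervalIntegrable a b
    have hcont1 : Continuous fun v : ℝ => ∫ u in v..1, gaux f (n + 1) u := by
      have h := intervalIntegral.continuous_primitive hInt 1
      rw [show (fun v : ℝ => ∫ u in v..1, gaux f (n + 1) u)
        = fun v : ℝ => -(∫ u in (1:ℝ)..v, gaux f (n + 1) u)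
        from funext fun v => intervalIntegral.integral_symm 1 v]
      exact h.neg
    have hT := (((hcont1.tendsto 0).comp hev).const_mul ((n : ℝ) + 1))
    have : Tendsto (fun t : ℝ => alphaF f γ lam (n + 1) t) atTop
        (nhds (((n : ℝ) + 1) * ∫ u in (0:ℝ)..1, gaux f (n + 1) u)) := by
      simpa only [halpha, Function.comp] using hT
    convert this using 2 <;> push_cast <;> simp [gaux_eq]
  · have h3 : ∀ u : ℝ, Real.exp (2 * (phiF f (n + 1) u - phiF f (n + 1) 1))
        = Real.exp (-2 * ∑ j ∈ Finset.Icc 1 n, 1 / (j : ℝ)) *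
          Real.exp (2 * ∑ j ∈ Finset.Icc 1 n, u ^ j / (j : ℝ)) := by
      intro u
      rw [hphi, hphi, ← Real.exp_add]
      congr 1
      rw [show (∑ j ∈ Finset.Icc 1 n, (1:ℝ) ^ j / (j : ℝ))
        = ∑ j ∈ Finset.Icc 1 n, 1 / (j : ℝ) from by simp]
      ring
    simp only [Nat.add_sub_cancel]
    rw [show (fun u : ℝ => Real.exp (2 * (phiF f (n + 1) u - phiF f (n + 1) 1)))
      = fun u : ℝ => Real.exp (-2 * ∑ j ∈ Finset.Icc 1 n, 1 / (j : ℝ)) *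
          Real.exp (2 * ∑ j ∈ Finset.Icc 1 n, u ^ j / (j : ℝ)) from funext h3]
    rw [intervalIntegral.integral_const_mul]
    ring
end
end

section
/- If f(1) > 0, then for every λ > 0: lim_{t→∞} R(t,i) = 0 for every i ≥ 1, hence lim_{t→∞} \hat q(t + (ln u)/λ, u) = 0 for every u ∈ [0,1), and consequently lim_{t→∞} α(t,λ) = 1. -/
open Finset MeasureTheory intervalIntegral Real Filter

noncomputable section

set_option maxHeartbeats 2000000 in
/-- If `f(1) > 0`, then `lim_{t→∞} R(t,i) = 0` for every `i ≥ 1`, hence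
`lim_{t→∞} q̂(t + (ln u)/λ, u) = 0` for every `u ∈ [0,1)`, and `lim_{t→∞} α(t,λ) = 1`. -/
theorem stmt_8
    (m : ℕ) (hm : 1 ≤ m) (f : ℕ → ℝ)
    (hf_nonneg : ∀ k, 0 ≤ f k)
    (hf_sum : ∑ k ∈ Finset.Icc 1 m, f k = 1)
    (hf_supp : ∀ k : ℕ, k = 0 ∨ m < k → f k = 0)
    (lam : ℝ) (hlam : 0 < lam)
    (γ : ℕ → ℕ → ℝ)
    (hγ_zero : ∀ n j : ℕ, cdfF f n = 0 → 1 ≤ j → j ≤ n → γ n j = 1)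
    (hγ_rec : ∀ n i : ℕ, 0 < cdfF f n → 1 ≤ i → i < n →
      γ n i = 2 * (∑ j ∈ Finset.Icc 1 (n - i), cdfF f j * γ (n - j) i) /
        (∑ k ∈ Finset.Icc (i + 1) n, cdfF f k))
    (hγ_diag : ∀ n : ℕ, 0 < cdfF f n →
      γ n n = (n : ℝ) - ∑ i ∈ Finset.Icc 1 (n - 1), γ n i)
    (hf1 : 0 < f 1) :
    (∀ i : ℕ, 1 ≤ i →
      Filter.Tendsto (fun t : ℝ => Rfun f γ lam t i) Filter.atTop (nhds 0))
    ∧ (∀ u : ℝ, 0 ≤ u → u < 1 →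
      Filter.Tendsto (fun t : ℝ => qhat f γ lam m (t + Real.log u / lam) u)
        Filter.atTop (nhds 0))
    ∧ Filter.Tendsto (fun t : ℝ => alphaF f γ lam m t) Filter.atTop (nhds 1) := by
  -- basic facts
  have hFnonneg : ∀ n, 0 ≤ cdfF f n := fun n =>
    Finset.sum_nonneg fun j _ => hf_nonneg j
  have hFpos : ∀ n, 1 ≤ n → 0 < cdfF f n := by
    intro n hn
    exact lt_of_lt_of_le hf1 (Finset.single_le_sum (fun j _ => hf_nonneg j)
      (Finset.mem_Icc.2 ⟨le_refl 1, hn⟩))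
  have hFle : ∀ n, cdfF f n ≤ 1 := by
    intro n
    rcases le_or_gt n m with h | h
    · calc cdfF f n ≤ ∑ k ∈ Finset.Icc 1 m, f k := by
            apply Finset.sum_le_sum_of_subset_of_nonneg
            · exact Finset.Icc_subset_Icc_right h
            · intro i _ _; exact hf_nonneg i
          _ = 1 := hf_sum
    · have : cdfF f n = ∑ k ∈ Finset.Icc 1 m, f k := by
        apply (Finset.sum_subset (Finset.Icc_subset_Icc_right h.le) _).symm
        intro j hj hj'
        simp only [Finset.mem_Icc, not_and, not_le] at hj hj'
        exact hf_supp j (Or.inr (hj' hj.1))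
      rw [this, hf_sum]
  have hSpos : ∀ i : ℕ, 1 ≤ i → 0 < lam * ∑ j ∈ Finset.Icc 1 i, cdfF f j := by
    intro i hi
    refine mul_pos hlam ?_
    exact lt_of_lt_of_le (hFpos 1 le_rfl) (Finset.single_le_sum
      (fun j _ => hFnonneg j) (Finset.mem_Icc.2 ⟨le_refl 1, hi⟩))
  have hexp : ∀ c : ℝ, 0 < c → Tendsto (fun t : ℝ => Real.exp (-c * t)) atTop (nhds 0) := by
    intro c hc
    have h1 : Tendsto (fun t : ℝ => c * t) atTop atTop :=
      Tendsto.const_mul_atTop hc tendsto_id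
    have := Real.tendsto_exp_neg_atTop_nhds_zero.comp h1
    simpa [Function.comp_def, neg_mul] using this
  -- Part 1
  have hR : ∀ i : ℕ, 1 ≤ i →
      Tendsto (fun t : ℝ => Rfun f γ lam t i) atTop (nhds 0) := by
    intro i hi
    have heq : (fun t : ℝ => Rfun f γ lam t i) = fun t : ℝ =>
        ∑ k ∈ Finset.Icc 1 i, γ i k *
          Real.exp (-(lam * ∑ j ∈ Finset.Icc 1 k, cdfF f j) * t) := by
      funext t; simp [Rfun, if_pos (hFpos i hi)]
    rw [heq]
    have := tendsto_finset_sum (Finset.Icc 1 i)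
      (fun k hk => (hexp _ (hSpos k (Finset.mem_Icc.1 hk).1)).const_mul (γ i k))
    simpa using this
  -- Part 2
  have hQ : ∀ u : ℝ, 0 ≤ u → u < 1 →
      Tendsto (fun t : ℝ => qhat f γ lam m (t + Real.log u / lam) u) atTop (nhds 0) := by
    intro u hu0 hu1
    have hshift : Tendsto (fun t : ℝ => t + Real.log u / lam) atTop atTop :=
      tendsto_atTop_add_const_right _ _ tendsto_id
    have hR' : ∀ i ∈ Finset.Icc 1 (m - 1),
        Tendsto (fun t : ℝ => Rfun f γ lam (t + Real.log u / lam) i) atTop (nhds 0) :=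
      fun i hi => (hR i (Finset.mem_Icc.1 hi).1).comp hshift
    have h1 : Tendsto (fun t : ℝ => ∑ i ∈ Finset.Icc 1 (m - 1),
        Rfun f γ lam (t + Real.log u / lam) i) atTop (nhds 0) := by
      simpa using tendsto_finset_sum _ hR'
    have h2 : Tendsto (fun t : ℝ => ∑ i ∈ Finset.Icc 1 (m - 1),
        Rfun f γ lam (t + Real.log u / lam) i *
          ∑ j ∈ Finset.Icc (m - i) (m - 1),
            (1 - cdfF f j) * u ^ ((i : ℝ) + (j : ℝ) - phiDeriv f m 1 - 1)) atTop (nhds 0) := by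
      simpa using tendsto_finset_sum _ (fun i hi => (hR' i hi).mul_const _)
    have := (h1.const_mul (2 * u ^ ((m : ℝ) - phiDeriv f m 1 - 1) * (1 - u))).sub
      (h2.const_mul (2 * (1 - u) ^ 2))
    simpa [qhat] using this
  refine ⟨hR, hQ, ?_⟩
  -- Part 3
  have hmR : (1:ℝ) ≤ (m:ℝ) := by exact_mod_cast hm
  have hphiD : phiDeriv f m 1 ≤ (m:ℝ) - 1 := by
    have h1 : phiDeriv f m 1 ≤ ∑ _i ∈ Finset.Icc 1 (m-1), (1:ℝ) := by
      apply Finset.sum_le_sum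
      intro i _
      have := hFnonneg i
      simp only [one_pow, mul_one]
      linarith
    have h2 : ∑ _i ∈ Finset.Icc 1 (m-1), (1:ℝ) = ((m:ℝ) - 1) := by
      rw [Finset.sum_const, Nat.card_Icc]
      have : (m - 1 + 1 - 1 : ℕ) = m - 1 := by omega
      rw [this, nsmul_eq_mul, mul_one]
      have : ((m - 1 : ℕ) : ℝ) = (m:ℝ) - 1 := by
        have := Nat.cast_sub hm (R := ℝ); simpa using this
      rw [this]
    linarith
  have hE0 : Tendsto (fun t : ℝ => Real.exp (-(lam * t))) atTop (nhds 0) := by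
    simpa [neg_mul] using hexp lam hlam
  have hphiC : Continuous (phiF f m) := by
    unfold phiF
    exact continuous_finset_sum _ fun i _ => continuous_const.mul (continuous_pow i)
  -- boundary term tends to 0
  have hBexp : Tendsto (fun t : ℝ => Real.exp (2 * (phiF f m (Real.exp (-(lam * t))) - phiF f m 1)
      - lam * t * ((m:ℝ) - phiDeriv f m 1))) atTop (nhds 0) := by
    have h1 : Tendsto (fun t : ℝ => 2 * (phiF f m (Real.exp (-(lam * t))) - phiF f m 1))
        atTop (nhds (2 * (phiF f m 0 - phiF f m 1))) := by
      exact ((((hphiC.tendsto 0).comp hE0).sub tendsto_const_nhds).const_mul 2)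
    have h2 : Tendsto (fun t : ℝ => -(lam * t * ((m:ℝ) - phiDeriv f m 1))) atTop atBot := by
      rw [tendsto_neg_atBot_iff]
      have hc : 0 < lam * ((m:ℝ) - phiDeriv f m 1) := mul_pos hlam (by linarith)
      have := Tendsto.const_mul_atTop hc (tendsto_id (α := ℝ))
      refine this.congr fun t => by simp only [id_eq]; ring
    have h3 : Tendsto (fun t : ℝ => 2 * (phiF f m (Real.exp (-(lam * t))) - phiF f m 1)
        - lam * t * ((m:ℝ) - phiDeriv f m 1)) atTop atBot := by
      have := h1.add_atBot h2
      refine this.congr fun t => by ring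
    exact Real.tendsto_exp_atBot.comp h3
  have hPref : Tendsto (fun t : ℝ => (m:ℝ) - ((m:ℝ) - 1) * Real.exp (-(lam * t)))
      atTop (nhds (m:ℝ)) := by
    have := tendsto_const_nhds (α := ℝ) (x := (m:ℝ)) (f := atTop)
    simpa using this.sub (hE0.const_mul ((m:ℝ) - 1))
  have hB : Tendsto (fun t : ℝ => ((m:ℝ) - ((m:ℝ) - 1) * Real.exp (-(lam * t))) *
      Real.exp (2 * (phiF f m (Real.exp (-(lam * t))) - phiF f m 1)
        - lam * t * ((m:ℝ) - phiDeriv f m 1))) atTop (nhds 0) := by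
    simpa using hPref.mul hBexp
  -- the bound for qhat
  have hRb : ∀ s : ℝ, 0 ≤ s → ∀ i : ℕ, 1 ≤ i →
      |Rfun f γ lam s i| ≤ ∑ k ∈ Finset.Icc 1 i, |γ i k| := by
    intro s hs i hi
    rw [Rfun, if_pos (hFpos i hi)]
    refine le_trans (Finset.abs_sum_le_sum_abs _ _) (Finset.sum_le_sum ?_)
    intro k hk
    rw [abs_mul, abs_of_pos (Real.exp_pos _)]
    have h1 : Real.exp (-(lam * ∑ j ∈ Finset.Icc 1 k, cdfF f j) * s) ≤ 1 := by
      rw [Real.exp_le_one_iff]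
      have := hSpos k (Finset.mem_Icc.1 hk).1
      nlinarith
    calc |γ i k| * Real.exp (-(lam * ∑ j ∈ Finset.Icc 1 k, cdfF f j) * s)
        ≤ |γ i k| * 1 := mul_le_mul_of_nonneg_left h1 (abs_nonneg _)
      _ = |γ i k| := mul_one _
  set G : ℝ := ∑ i ∈ Finset.Icc 1 (m - 1), ∑ k ∈ Finset.Icc 1 i, |γ i k| with hGdef
  have hGnn : 0 ≤ G :=
    Finset.sum_nonneg fun i _ => Finset.sum_nonneg fun k _ => abs_nonneg _
  set C : ℝ := 2 * G + 2 * (G * m) with hCdef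
  have hCnn : 0 ≤ C := by positivity
  have hqb : ∀ s u : ℝ, 0 ≤ s → 0 < u → u ≤ 1 → |qhat f γ lam m s u| ≤ C := by
    intro s u hs hu0 hu1
    have hc0 : (0:ℝ) ≤ (m:ℝ) - phiDeriv f m 1 - 1 := by linarith
    have hS1 : |∑ i ∈ Finset.Icc 1 (m - 1), Rfun f γ lam s i| ≤ G := by
      refine le_trans (Finset.abs_sum_le_sum_abs _ _) (Finset.sum_le_sum ?_)
      intro i hi
      exact hRb s hs i (Finset.mem_Icc.1 hi).1
    have hTb : ∀ i ∈ Finset.Icc 1 (m - 1),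
        |∑ j ∈ Finset.Icc (m - i) (m - 1),
          (1 - cdfF f j) * u ^ ((i : ℝ) + (j : ℝ) - phiDeriv f m 1 - 1)| ≤ (m:ℝ) := by
      intro i hi
      obtain ⟨hi1, hi2⟩ := Finset.mem_Icc.1 hi
      refine le_trans (Finset.abs_sum_le_sum_abs _ _) ?_
      have him : i ≤ m := le_trans hi2 (Nat.sub_le m 1)
      calc ∑ j ∈ Finset.Icc (m - i) (m - 1),
            |(1 - cdfF f j) * u ^ ((i : ℝ) + (j : ℝ) - phiDeriv f m 1 - 1)|
          ≤ ∑ _j ∈ Finset.Icc (m - i) (m - 1), (1:ℝ) := by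
            apply Finset.sum_le_sum
            intro j hj
            obtain ⟨hj1, _⟩ := Finset.mem_Icc.1 hj
            rw [abs_mul]
            have hFj := hFle j
            have hFj0 := hFnonneg j
            have h1F : |1 - cdfF f j| ≤ 1 := abs_le.2 ⟨by linarith, by linarith⟩
            have hje : (0:ℝ) ≤ (i : ℝ) + (j : ℝ) - phiDeriv f m 1 - 1 := by
              have : ((m - i : ℕ) : ℝ) ≤ (j : ℝ) := Nat.cast_le.2 hj1
              rw [Nat.cast_sub him] at this
              linarith
            have hup : |u ^ ((i : ℝ) + (j : ℝ) - phiDeriv f m 1 - 1)| ≤ 1 := by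
              rw [abs_of_nonneg (Real.rpow_nonneg hu0.le _)]
              exact Real.rpow_le_one hu0.le hu1 hje
            calc |1 - cdfF f j| * |u ^ ((i : ℝ) + (j : ℝ) - phiDeriv f m 1 - 1)|
                ≤ 1 * 1 := mul_le_mul h1F hup (abs_nonneg _) zero_le_one
              _ = 1 := one_mul 1
        _ = ((Finset.Icc (m - i) (m - 1)).card : ℝ) := by rw [Finset.sum_const, nsmul_eq_mul, mul_one]
        _ ≤ (m:ℝ) := by
            rw [Nat.card_Icc]
            exact_mod_cast Nat.le_of_lt_succ (by omega : m - 1 + 1 - (m - i) < m + 1)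
    have hS2 : |∑ i ∈ Finset.Icc 1 (m - 1), Rfun f γ lam s i *
        ∑ j ∈ Finset.Icc (m - i) (m - 1),
          (1 - cdfF f j) * u ^ ((i : ℝ) + (j : ℝ) - phiDeriv f m 1 - 1)| ≤ G * m := by
      refine le_trans (Finset.abs_sum_le_sum_abs _ _) ?_
      rw [hGdef, Finset.sum_mul]
      apply Finset.sum_le_sum
      intro i hi
      rw [abs_mul]
      exact mul_le_mul (hRb s hs i (Finset.mem_Icc.1 hi).1) (hTb i hi) (abs_nonneg _)
        (Finset.sum_nonneg fun k _ => abs_nonneg _)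
    have hup : u ^ ((m:ℝ) - phiDeriv f m 1 - 1) ≤ 1 := Real.rpow_le_one hu0.le hu1 hc0
    have hup0 : 0 ≤ u ^ ((m:ℝ) - phiDeriv f m 1 - 1) := Real.rpow_nonneg hu0.le _
    have hA2 : |2 * u ^ ((m:ℝ) - phiDeriv f m 1 - 1) * (1 - u)| ≤ 2 := by
      rw [abs_of_nonneg (by nlinarith)]
      nlinarith
    have hB2 : |2 * (1 - u)^2| ≤ 2 := by
      rw [abs_of_nonneg (by positivity)]
      nlinarith
    rw [qhat]
    refine le_trans (abs_sub _ _) ?_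
    have e1 : |2 * u ^ ((m:ℝ) - phiDeriv f m 1 - 1) * (1 - u)| *
        |∑ i ∈ Finset.Icc 1 (m - 1), Rfun f γ lam s i| ≤ 2 * G :=
      mul_le_mul hA2 hS1 (abs_nonneg _) (by norm_num)
    have e2 : |2 * (1 - u)^2| * |∑ i ∈ Finset.Icc 1 (m - 1), Rfun f γ lam s i *
        ∑ j ∈ Finset.Icc (m - i) (m - 1),
          (1 - cdfF f j) * u ^ ((i : ℝ) + (j : ℝ) - phiDeriv f m 1 - 1)| ≤ 2 * (G * m) :=
      mul_le_mul hB2 hS2 (abs_nonneg _) (by norm_num)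
    rw [← abs_mul] at e1 e2
    rw [hCdef]; linarith
  -- phi is monotone bound
  have hphiLe : ∀ u : ℝ, 0 ≤ u → u ≤ 1 → phiF f m u ≤ phiF f m 1 := by
    intro u h0 h1
    apply Finset.sum_le_sum
    intro i _
    have hFi := hFle i
    have hco : 0 ≤ (1 - cdfF f i) / (i:ℝ) := div_nonneg (by linarith) (Nat.cast_nonneg i)
    have hui : u ^ i ≤ 1 ^ i := by
      rw [one_pow]; exact pow_le_one₀ h0 h1
    exact mul_le_mul_of_nonneg_left hui hco
  -- measurability
  have hRm : ∀ (t : ℝ) (i : ℕ),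
      Measurable (fun u : ℝ => Rfun f γ lam (t + Real.log u / lam) i) := by
    intro t i
    by_cases h : 0 < cdfF f i
    · simp only [Rfun, if_pos h]
      apply Finset.measurable_sum
      intro k _
      apply Measurable.const_mul
      apply Real.measurable_exp.comp
      exact ((Real.measurable_log.div_const lam).const_add t).const_mul _
    · simp only [Rfun, if_neg h]; exact measurable_const
  have hgm : ∀ t : ℝ, Measurable (fun u : ℝ =>
      Real.exp (2 * (phiF f m u - phiF f m 1)) * qhat f γ lam m (t + Real.log u / lam) u) := by
    intro t
    apply Measurable.mul
    · exact (Real.continuous_exp.comp (continuous_const.mul (hphiC.sub continuous_const))).measurable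
    · simp only [qhat]
      apply Measurable.sub
      · apply Measurable.mul
        · exact ((measurable_id.pow_const _).const_mul 2).mul
            (measurable_const.sub measurable_id)
        · exact Finset.measurable_sum _ fun i _ => hRm t i
      · apply Measurable.mul
        · exact ((measurable_const.sub measurable_id).pow measurable_const).const_mul 2
        · apply Finset.measurable_sum
          intro i _
          refine (hRm t i).mul (Finset.measurable_sum _ fun j _ => ?_)
          exact (measurable_id.pow_const _).const_mul _
  -- qhat at v = 1 is zero
  have hq1 : ∀ s : ℝ, qhat f γ lam m s 1 = 0 := by
    intro s; simp [qhat]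
  -- the integral term tends to 0
  have hI : Tendsto (fun t : ℝ => ∫ u in Real.exp (-(lam * t))..1,
      Real.exp (2 * (phiF f m u - phiF f m 1)) * qhat f γ lam m (t + Real.log u / lam) u)
      atTop (nhds 0) := by
    have hIeq : ∀ᶠ t : ℝ in atTop,
        (∫ u in Set.Ioc (0:ℝ) 1, Set.indicator (Set.Ioc (Real.exp (-(lam * t))) 1)
          (fun u => Real.exp (2 * (phiF f m u - phiF f m 1)) *
            qhat f γ lam m (t + Real.log u / lam) u) u)
        = ∫ u in Real.exp (-(lam * t))..1,
            Real.exp (2 * (phiF f m u - phiF f m 1)) *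
              qhat f γ lam m (t + Real.log u / lam) u := by
      filter_upwards [eventually_ge_atTop (0:ℝ)] with t ht
      have he1 : Real.exp (-(lam * t)) ≤ 1 := by
        rw [Real.exp_le_one_iff]
        nlinarith
      rw [intervalIntegral.integral_of_le he1,
        MeasureTheory.setIntegral_indicator measurableSet_Ioc,
        Set.inter_eq_self_of_subset_right (Set.Ioc_subset_Ioc_left (Real.exp_pos _).le)]
    have hmain : Tendsto (fun t : ℝ => ∫ u in Set.Ioc (0:ℝ) 1,
        Set.indicator (Set.Ioc (Real.exp (-(lam * t))) 1)
          (fun u => Real.exp (2 * (phiF f m u - phiF f m 1)) *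
            qhat f γ lam m (t + Real.log u / lam) u) u) atTop (nhds 0) := by
      have key := MeasureTheory.tendsto_integral_filter_of_dominated_convergence
        (μ := MeasureTheory.volume.restrict (Set.Ioc (0:ℝ) 1)) (l := atTop)
        (F := fun (t : ℝ) (u : ℝ) => Set.indicator (Set.Ioc (Real.exp (-(lam * t))) 1)
          (fun u => Real.exp (2 * (phiF f m u - phiF f m 1)) *
            qhat f γ lam m (t + Real.log u / lam) u) u)
        (f := fun _ => (0:ℝ)) (bound := fun _ => C) ?_ ?_ ?_ ?_
      · simpa using key
      · exact Filter.Eventually.of_forall fun t =>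
          ((hgm t).indicator measurableSet_Ioc).aestronglyMeasurable
      · filter_upwards [eventually_ge_atTop (0:ℝ)] with t ht
        refine Filter.Eventually.of_forall fun u => ?_
        by_cases hu : u ∈ Set.Ioc (Real.exp (-(lam * t))) 1
        · rw [Set.indicator_of_mem hu]
          obtain ⟨hu1, hu2⟩ := hu
          have hu0 : 0 < u := lt_trans (Real.exp_pos _) hu1
          have hlog : -(lam * t) ≤ Real.log u :=
            (Real.le_log_iff_exp_le hu0).2 hu1.le
          have hs0 : 0 ≤ t + Real.log u / lam := by
            have hkey : lam * (t + Real.log u / lam) = lam * t + Real.log u := by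
              field_simp
            nlinarith [hkey]
          have hexp1 : Real.exp (2 * (phiF f m u - phiF f m 1)) ≤ 1 := by
            rw [Real.exp_le_one_iff]
            have := hphiLe u hu0.le hu2
            linarith
          rw [Real.norm_eq_abs, abs_mul, abs_of_pos (Real.exp_pos _)]
          calc Real.exp (2 * (phiF f m u - phiF f m 1)) *
                |qhat f γ lam m (t + Real.log u / lam) u|
              ≤ 1 * C := mul_le_mul hexp1 (hqb _ u hs0 hu0 hu2) (abs_nonneg _) zero_le_one
            _ = C := one_mul C
        · rw [Set.indicator_of_notMem hu]
          simpa using hCnn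
      · exact MeasureTheory.integrableOn_const measure_Ioc_lt_top.ne (by simp)
      · refine (MeasureTheory.ae_restrict_iff' measurableSet_Ioc).2
          (Filter.Eventually.of_forall ?_)
        intro u hu
        obtain ⟨hu0, hu1⟩ := hu
        by_cases hu1' : u = 1
        · subst hu1'
          have hval : ∀ t : ℝ, Set.indicator (Set.Ioc (Real.exp (-(lam * t))) 1)
              (fun u => Real.exp (2 * (phiF f m u - phiF f m 1)) *
                qhat f γ lam m (t + Real.log u / lam) u) 1 = 0 := by
            intro t
            by_cases h : (1:ℝ) ∈ Set.Ioc (Real.exp (-(lam * t))) 1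
            · rw [Set.indicator_of_mem h, hq1, mul_zero]
            · rw [Set.indicator_of_notMem h]
          simpa [hval] using tendsto_const_nhds (α := ℝ) (x := (0:ℝ)) (f := atTop)
        · have hu1'' : u < 1 := lt_of_le_of_ne hu1 hu1'
          have hev : (fun t : ℝ => Set.indicator (Set.Ioc (Real.exp (-(lam * t))) 1)
              (fun u => Real.exp (2 * (phiF f m u - phiF f m 1)) *
                qhat f γ lam m (t + Real.log u / lam) u) u) =ᶠ[atTop]
              (fun t : ℝ => Real.exp (2 * (phiF f m u - phiF f m 1)) *
                qhat f γ lam m (t + Real.log u / lam) u) := by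
            filter_upwards [hE0.eventually_lt_const hu0] with t ht
            exact Set.indicator_of_mem (Set.mem_Ioc.2 ⟨ht, hu1⟩) _
          have hgu : Tendsto (fun t : ℝ => Real.exp (2 * (phiF f m u - phiF f m 1)) *
              qhat f γ lam m (t + Real.log u / lam) u) atTop (nhds 0) := by
            simpa using (hQ u hu0.le hu1'').const_mul
              (Real.exp (2 * (phiF f m u - phiF f m 1)))
          exact Filter.Tendsto.congr' hev.symm hgu
    exact hmain.congr' hIeq
  -- assemble
  have hfinal := (tendsto_const_nhds (α := ℝ) (x := (1:ℝ)) (f := atTop)).sub hI |>.sub hB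
  simpa [alphaF] using hfinal
end
end
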